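/- Fix real algebraic numbers a, c with a, c > 0 and a rational ε ∈ (0, 1), and let f(t) = e^t(1 − cos t) + t(1 − cos(at)) − c·|sin(at)|. Then there exists a threshold M (depending on a, c, ε) such that if there exist natural numbers n, m with m ≥ M and |a − n/m| ≤ c(1 − ε)/(2π² m²), then f(t) = 0 for some t ≥ 2πM. -/

import Mathlib

open Real

/-- The homogeneous Diophantine approximation type of a real number a:
L(a) = inf { c ∈ ℝ : |a − n/m| < c/m² for some integers m, n with m ≥ 1 }. -/
noncomputable def diophType (a : ℝ) : ℝ :=
  sInf { c : ℝ | ∃ m n : ℤ, 1 ≤ m ∧ |a - (n : ℝ) / (m : ℝ)| < c / (m : ℝ) ^ 2 }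

set_option maxHeartbeats 1600000 in
/-- Lemma 7: there is an effective threshold M such that if natural numbers n, m with m ≥ M
witness |a − n/m| ≤ c(1 − ε)/(2π²m²), then f(t) = e^t(1 − cos t) + t(1 − cos(at)) − c|sin(at)|
has a zero at some t ≥ 2πM. -/
theorem good_approximation_forces_zero
    (a c : ℝ) (ha : IsAlgebraic ℚ a) (hc : IsAlgebraic ℚ c)
    (hapos : 0 < a) (hcpos : 0 < c)
    (ε : ℚ) (hε0 : 0 < ε) (hε1 : ε < 1)
    (f : ℝ → ℝ)
    (hf : ∀ t, f t = Real.exp t * (1 - Real.cos t) + t * (1 - Real.cos (a * t))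
        - c * |Real.sin (a * t)|) :
    ∃ M : ℕ,
      (∃ n m : ℕ, M ≤ m ∧
        |a - (n : ℝ) / (m : ℝ)| ≤ c * (1 - (ε : ℝ)) / (2 * π ^ 2 * (m : ℝ) ^ 2)) →
      ∃ t : ℝ, 2 * π * (M : ℝ) ≤ t ∧ f t = 0 := by
  have hπ := Real.pi_pos
  have hπ1 : (1:ℝ) ≤ π := by linarith [Real.pi_gt_three]
  have hεR : (0:ℝ) < (ε:ℝ) := by exact_mod_cast hε0
  have hεR1 : (ε:ℝ) < 1 := by exact_mod_cast hε1
  set E : ℝ := Real.sqrt (ε:ℝ) with hE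
  have hE0 : 0 < E := Real.sqrt_pos.mpr hεR
  have hE1 : E ≤ 1 := by
    rw [hE, show (1:ℝ) = Real.sqrt 1 by simp]
    exact Real.sqrt_le_sqrt hεR1.le
  have hEsq : E ^ 2 = (ε:ℝ) := Real.sq_sqrt hεR.le
  clear_value E
  refine ⟨⌈c⌉₊ + ⌈c / E⌉₊ + 1, ?_⟩
  rintro ⟨n, m, hMm, happ⟩
  set M : ℕ := ⌈c⌉₊ + ⌈c / E⌉₊ + 1 with hMdef
  clear_value M
  have hm1 : 1 ≤ m := le_trans (by omega) hMm
  have hmR : (0:ℝ) < (m:ℝ) := by exact_mod_cast hm1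
  have hMR : (0:ℝ) < (M:ℝ) := by exact_mod_cast (by omega : 0 < M)
  have hMmR : (M:ℝ) ≤ (m:ℝ) := by exact_mod_cast hMm
  have hcM : c ≤ (M:ℝ) := by
    calc c ≤ (⌈c⌉₊ : ℝ) := Nat.le_ceil c
    _ ≤ (M:ℝ) := by exact_mod_cast (by omega : ⌈c⌉₊ ≤ M)
  have hcEM : c / E ≤ (M:ℝ) := by
    calc c / E ≤ (⌈c / E⌉₊ : ℝ) := Nat.le_ceil _
    _ ≤ (M:ℝ) := by exact_mod_cast (by omega : ⌈c / E⌉₊ ≤ M)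
  -- the phase defect δ
  set δ : ℝ := 2 * π * m * a - 2 * π * n with hδdef
  clear_value δ
  have hat : a * (2 * π * m) = (n:ℝ) * (2 * π) + δ := by rw [hδdef]; ring
  -- bound |δ|
  have hδle : |δ| ≤ c * (1 - (ε:ℝ)) / (π * m) := by
    have : δ = (2 * π * m) * (a - (n:ℝ)/(m:ℝ)) := by
      field_simp [hδdef]; rw [hδdef]; ring
    rw [this, abs_mul, abs_of_pos (by positivity : (0:ℝ) < 2 * π * m)]
    calc 2 * π * m * |a - (n:ℝ)/(m:ℝ)|
        ≤ 2 * π * m * (c * (1 - (ε:ℝ)) / (2 * π ^ 2 * (m:ℝ) ^ 2)) := by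
          exact mul_le_mul_of_nonneg_left happ (by positivity)
      _ = c * (1 - (ε:ℝ)) / (π * m) := by field_simp
  have h1ε : (0:ℝ) < 1 - (ε:ℝ) := by linarith
  -- |δ| ≤ E / π ≤ 1
  have hδE : |δ| ≤ E / π := by
    have h1 : c * (1 - (ε:ℝ)) / (π * m) ≤ c / (π * M) := by
      apply div_le_div₀ (by positivity) (by nlinarith) (by positivity)
      have := mul_le_mul_of_nonneg_left hMmR hπ.le
      linarith
    have h2 : c / (π * M) ≤ E / π := by
      rw [div_le_div_iff₀ (by positivity) hπ]
      have : c ≤ M * E := (div_le_iff₀ hE0).mp hcEM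
      nlinarith
    linarith
  have hδ1 : |δ| ≤ 1 := by
    calc |δ| ≤ E / π := hδE
    _ ≤ 1 := by rw [div_le_one hπ]; linarith
  -- π m |δ| ≤ c (1-ε)
  have hπmδ : π * m * |δ| ≤ c * (1 - (ε:ℝ)) := by
    have := mul_le_mul_of_nonneg_left hδle (by positivity : (0:ℝ) ≤ π * m)
    calc π * m * |δ| ≤ π * m * (c * (1 - (ε:ℝ)) / (π * m)) := this
    _ = c * (1 - (ε:ℝ)) := by field_simp
  -- f at t₀ = 2πm
  set t₀ : ℝ := 2 * π * m with ht₀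
  clear_value t₀
  have hcos_t₀ : Real.cos t₀ = 1 := by
    rw [ht₀, show 2 * π * (m:ℝ) = (m:ℝ) * (2 * π) by ring]
    exact Real.cos_nat_mul_two_pi m
  have hcos_at₀ : Real.cos (a * t₀) = Real.cos δ := by
    rw [hat, show ((n:ℝ)) * (2 * π) + δ = δ + ((n:ℤ):ℝ) * (2 * π) by push_cast; ring]
    exact Real.cos_add_int_mul_two_pi δ n
  have hsin_at₀ : Real.sin (a * t₀) = Real.sin δ := by
    rw [hat, show ((n:ℝ)) * (2 * π) + δ = δ + ((n:ℤ):ℝ) * (2 * π) by push_cast; ring]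
    exact Real.sin_add_int_mul_two_pi δ n
  have hft₀ : f t₀ = t₀ * (1 - Real.cos δ) - c * |Real.sin δ| := by
    rw [hf, hcos_t₀, hcos_at₀, hsin_at₀]; ring
  -- f t₀ ≤ 0
  have hft₀le : f t₀ ≤ 0 := by
    rcases eq_or_ne δ 0 with h0 | h0
    · rw [hft₀, h0]; simp
    · have hd0 : 0 < |δ| := abs_pos.mpr h0
      have hsin : |δ| - |δ| ^ 3 / 4 < Real.sin |δ| := by
        have := Real.sin_gt_sub_cube hd0; linarith [pow_pos hd0 3]
      have habs_sin : |Real.sin δ| = Real.sin |δ| := by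
        rcases abs_cases δ with ⟨h, hpos⟩ | ⟨h, hneg⟩
        · rw [h, abs_of_nonneg (Real.sin_nonneg_of_nonneg_of_le_pi hpos (by linarith [h ▸ hδ1]))]
        · rw [h]
          have h1 : 0 ≤ Real.sin (-δ) := Real.sin_nonneg_of_nonneg_of_le_pi (by linarith)
            (by rw [← h]; linarith [hδ1])
          rw [Real.sin_neg] at h1
          rw [abs_of_nonpos (by linarith), Real.sin_neg]
      have hcosb : 1 - Real.cos δ ≤ δ ^ 2 / 2 := by
        linarith [Real.one_sub_sq_div_two_le_cos (x := δ)]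
      have hδsq : |δ| ^ 2 ≤ (ε:ℝ) := by
        calc |δ| ^ 2 ≤ (E / π) ^ 2 := pow_le_pow_left₀ (abs_nonneg δ) hδE 2
        _ = E ^ 2 / π ^ 2 := by ring
        _ ≤ E ^ 2 := div_le_self (by positivity) (by nlinarith)
        _ = (ε:ℝ) := hEsq
      have key : t₀ * (1 - Real.cos δ) ≤ π * m * |δ| ^ 2 := by
        have h2 : t₀ * (1 - Real.cos δ) ≤ t₀ * (δ ^ 2 / 2) := by
          apply mul_le_mul_of_nonneg_left hcosb (by rw [ht₀]; positivity)
        calc t₀ * (1 - Real.cos δ) ≤ t₀ * (δ ^ 2 / 2) := h2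
        _ = π * m * |δ| ^ 2 := by rw [ht₀, sq_abs]; ring
      rw [hft₀, habs_sin]
      have h3 : c * (|δ| - |δ| ^ 3 / 4) ≤ c * Real.sin |δ| :=
        mul_le_mul_of_nonneg_left hsin.le hcpos.le
      have h4 : π * m * |δ| ^ 2 ≤ c * (1 - (ε:ℝ)) * |δ| := by
        calc π * m * |δ| ^ 2 = (π * m * |δ|) * |δ| := by ring
        _ ≤ c * (1 - (ε:ℝ)) * |δ| := mul_le_mul_of_nonneg_right hπmδ (abs_nonneg δ)
      have h5 : |δ| ^ 3 ≤ (ε:ℝ) * |δ| := by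
        calc |δ| ^ 3 = |δ| ^ 2 * |δ| := by ring
        _ ≤ (ε:ℝ) * |δ| := mul_le_mul_of_nonneg_right hδsq (abs_nonneg δ)
      have h5c : c * |δ| ^ 3 ≤ c * ((ε:ℝ) * |δ|) := mul_le_mul_of_nonneg_left h5 hcpos.le
      have hce : 0 ≤ c * ((ε:ℝ) * |δ|) := by positivity
      nlinarith [key, h3, h4, h5c, hce]
  -- f at t₁ = 2πm + π is positive
  set t₁ : ℝ := 2 * π * m + π with ht₁
  clear_value t₁
  have hcos_t₁ : Real.cos t₁ = -1 := by
    rw [ht₁, show 2 * π * (m:ℝ) + π = ((m:ℤ):ℝ) * (2 * π) + π by push_cast; ring]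
    exact Real.cos_int_mul_two_pi_add_pi m
  have hft₁pos : 0 < f t₁ := by
    rw [hf, hcos_t₁]
    have ht₁pos : 0 < t₁ := by rw [ht₁]; positivity
    have hexp : t₁ + 1 ≤ Real.exp t₁ := Real.add_one_le_exp t₁
    have hcos2 : Real.cos (a * t₁) ≤ 1 := Real.cos_le_one _
    have hsin2 : |Real.sin (a * t₁)| ≤ 1 := Real.abs_sin_le_one _
    have hMt₁ : c ≤ t₁ := by
      calc c ≤ (M:ℝ) := hcM
      _ ≤ (m:ℝ) := hMmR
      _ ≤ t₁ := by rw [ht₁]; nlinarith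
    nlinarith [mul_nonneg ht₁pos.le (by linarith : (0:ℝ) ≤ 1 - Real.cos (a * t₁))]
  -- continuity and IVT
  have hcont : Continuous f := by
    have : f = fun t => Real.exp t * (1 - Real.cos t) + t * (1 - Real.cos (a * t))
        - c * |Real.sin (a * t)| := funext hf
    rw [this]; fun_prop
  have ht₀t₁ : t₀ ≤ t₁ := by rw [ht₀, ht₁]; linarith
  have hIVT := intermediate_value_Icc ht₀t₁ hcont.continuousOn
  have h0mem : (0:ℝ) ∈ Set.Icc (f t₀) (f t₁) := ⟨hft₀le, hft₁pos.le⟩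
  obtain ⟨t, htmem, htzero⟩ := hIVT h0mem
  refine ⟨t, ?_, htzero⟩
  calc 2 * π * (M:ℝ) ≤ 2 * π * (m:ℝ) := by nlinarith
  _ = t₀ := ht₀.symm
  _ ≤ t := htmem.1
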